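/- Let n ≥ 2 be an integer, t ∈ [0, π/2), s = sin t, and let E₁,…,E_{n+1} ∈ ℝⁿ be unit vectors with ⟨E_i, E_j⟩ = -1/n for i ≠ j. For 0 ≤ k ≤ n-1 let c = (1/(n-k+1))·(E₁ + ⋯ + E_{n-k+1}). Then d_K(s·c, s·E₁) = artanh( s·√(1 - k/(n(n-k+1))) / √(1 - s²·k/(n(n-k+1))) ). (This is the hyperbolic circumradius r_{n-k} of the (n-k)-dimensional face of the regular simplex τ[n,t].) -/

import Mathlib

open scoped RealInnerProductSpace
open Real

noncomputable def arcosh (x : ℝ) : ℝ := Real.log (x + Real.sqrt (x ^ 2 - 1))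

noncomputable def artanh (x : ℝ) : ℝ := (1 / 2) * Real.log ((1 + x) / (1 - x))

/-- Hyperbolic distance in the Cayley–Klein projective model. -/
noncomputable def dK {n : ℕ} (u w : EuclideanSpace ℝ (Fin n)) : ℝ :=
  _root_.arcosh ((1 - ⟪u, w⟫) / Real.sqrt ((1 - ‖u‖ ^ 2) * (1 - ‖w‖ ^ 2)))

lemma sum_ite_card' {α : Type*} [Fintype α] [DecidableEq α] (x : α) (a b : ℝ) :
    ∑ i, (if i = x then a else b) = a + ((Fintype.card α : ℝ) - 1) * b := by
  have h : ∀ i, (if i = x then a else b) = (if i = x then a - b else 0) + b := by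
    intro i; split <;> ring
  simp_rw [h]
  rw [Finset.sum_add_distrib, Finset.sum_ite_eq' Finset.univ x (fun _ => a - b),
    if_pos (Finset.mem_univ x), Finset.sum_const, Finset.card_univ, nsmul_eq_mul]
  ring

lemma key_analytic' (s a : ℝ) (hs : 0 ≤ s) (hs1 : s ^ 2 < 1) (ha1 : a ≤ 1) :
    _root_.arcosh ((1 - s ^ 2 * a) / Real.sqrt ((1 - s ^ 2 * a) * (1 - s ^ 2))) =
      _root_.artanh (s * Real.sqrt (1 - a) / Real.sqrt (1 - s ^ 2 * a)) := by
  set A := 1 - s ^ 2 * a with hAdef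
  set B := 1 - s ^ 2 with hBdef
  have hB : 0 < B := by simp only [hBdef]; linarith
  have hA : 0 < A := by nlinarith [sq_nonneg s]
  set u := s * Real.sqrt (1 - a) with hudef
  have hu0 : 0 ≤ u := mul_nonneg hs (Real.sqrt_nonneg _)
  have hu2 : u ^ 2 = s ^ 2 * (1 - a) := by
    rw [hudef, mul_pow, Real.sq_sqrt (by linarith)]
  have hAB : A - u ^ 2 = B := by rw [hu2]; ring
  have hsA : 0 < Real.sqrt A := Real.sqrt_pos.mpr hA
  have hsB : 0 < Real.sqrt B := Real.sqrt_pos.mpr hB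
  have hlt : u < Real.sqrt A := by
    rw [show u = Real.sqrt (u ^ 2) by rw [Real.sqrt_sq hu0]]
    exact Real.sqrt_lt_sqrt (by positivity) (by linarith)
  have hABs : Real.sqrt (A * B) = Real.sqrt A * Real.sqrt B := Real.sqrt_mul hA.le _
  have hXA : A / Real.sqrt (A * B) = Real.sqrt A / Real.sqrt B := by
    rw [hABs, div_eq_div_iff (by positivity) hsB.ne']
    nlinarith [Real.mul_self_sqrt hA.le]
  have hX2 : (Real.sqrt A / Real.sqrt B) ^ 2 - 1 = u ^ 2 / B := by
    rw [div_pow, Real.sq_sqrt hA.le, Real.sq_sqrt hB.le]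
    field_simp
    linarith
  have hXs : Real.sqrt ((Real.sqrt A / Real.sqrt B) ^ 2 - 1) = u / Real.sqrt B := by
    rw [hX2, Real.sqrt_div (by positivity), Real.sqrt_sq hu0]
  have hAA : Real.sqrt A ^ 2 = A := Real.sq_sqrt hA.le
  have hfrac : (1 + u / Real.sqrt A) / (1 - u / Real.sqrt A)
      = ((Real.sqrt A + u) / Real.sqrt B) ^ 2 := by
    have h1 : 1 + u / Real.sqrt A = (Real.sqrt A + u) / Real.sqrt A := by field_simp
    have h2 : 1 - u / Real.sqrt A = (Real.sqrt A - u) / Real.sqrt A := by field_simp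
    have h3 : (Real.sqrt A + u) / Real.sqrt A / ((Real.sqrt A - u) / Real.sqrt A)
        = (Real.sqrt A + u) / (Real.sqrt A - u) := by
      rw [div_div_div_eq, mul_comm (Real.sqrt A + u), mul_div_mul_left _ _ hsA.ne']
    rw [h1, h2, h3, div_pow, Real.sq_sqrt hB.le]
    rw [div_eq_div_iff (by linarith) hB.ne']
    nlinarith [hAA]
  rw [_root_.arcosh, _root_.artanh, hXA, hXs, hfrac, Real.log_pow]
  rw [← add_div]
  push_cast
  ring

theorem face_circumradius (n : ℕ) (hn : 2 ≤ n) (t : ℝ) (ht : t ∈ Set.Ico 0 (π / 2))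
    (s : ℝ) (hs : s = Real.sin t)
    (E : Fin (n + 1) → EuclideanSpace ℝ (Fin n))
    (hnorm : ∀ i, ‖E i‖ = 1)
    (hinner : ∀ i j, i ≠ j → ⟪E i, E j⟫ = -1 / (n : ℝ))
    (k : ℕ) (hk : k ≤ n - 1)
    (c : EuclideanSpace ℝ (Fin n))
    (hc : c = ((n : ℝ) - k + 1)⁻¹ • ∑ i : Fin (n - k + 1), E (Fin.castLE (by omega) i)) :
    dK (s • c) (s • E 0) =
      _root_.artanh (s * Real.sqrt (1 - (k : ℝ) / (n * ((n : ℝ) - k + 1))) /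
        Real.sqrt (1 - s ^ 2 * ((k : ℝ) / (n * ((n : ℝ) - k + 1))))) := by
  have hkn : k ≤ n := by omega
  have hle : n - k + 1 ≤ n + 1 := by omega
  have hNval : ((n - k + 1 : ℕ) : ℝ) = (n : ℝ) - k + 1 := by
    push_cast [Nat.cast_sub hkn]; ring
  have hn0 : (n : ℝ) ≠ 0 := by positivity
  have hkR : (k : ℝ) + 1 ≤ (n : ℝ) := by exact_mod_cast Nat.succ_le_of_lt (by omega)
  have hNpos : (0 : ℝ) < (n : ℝ) - k + 1 := by linarith
  set a : ℝ := (k : ℝ) / (n * ((n : ℝ) - k + 1)) with hadef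
  have hnN : (0 : ℝ) < n * ((n : ℝ) - k + 1) := by positivity
  have ha1 : a ≤ 1 := by
    rw [hadef, div_le_one hnN]
    nlinarith
  -- inner products
  have hEE : ∀ i j : Fin (n - k + 1),
      ⟪E (Fin.castLE hle i), E (Fin.castLE hle j)⟫ = if i = j then 1 else -1 / (n : ℝ) := by
    intro i j
    by_cases h : i = j
    · subst h
      rw [if_pos rfl, real_inner_self_eq_norm_sq, hnorm]
      norm_num
    · rw [if_neg h]
      exact hinner _ _ (fun hh => h ((Fin.castLE_injective hle) hh))
  have h0 : E (0 : Fin (n + 1)) = E (Fin.castLE hle (0 : Fin (n - k + 1))) := by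
    congr 1
  have hsum1 : ∑ i : Fin (n - k + 1), ⟪E (Fin.castLE hle i), E (0 : Fin (n + 1))⟫
      = 1 + (((n : ℝ) - k + 1) - 1) * (-1 / n) := by
    rw [show (1 : ℝ) + (((n:ℝ) - k + 1) - 1) * (-1/n)
        = 1 + ((Fintype.card (Fin (n - k + 1)) : ℝ) - 1) * (-1/n) by
      rw [Fintype.card_fin, hNval]]
    rw [← sum_ite_card' (0 : Fin (n - k + 1)) 1 (-1 / (n:ℝ))]
    refine Finset.sum_congr rfl fun i _ => ?_
    rw [h0, hEE]
  have hkey : 1 + (((n : ℝ) - k + 1) - 1) * (-1 / n) = (k : ℝ) / n := by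
    field_simp
    ring
  have hN0 : ((n : ℝ) - k + 1) ≠ 0 := hNpos.ne'
  have hcE : ⟪c, E 0⟫ = a := by
    rw [hc, real_inner_smul_left, sum_inner, hsum1, hkey, inv_mul_eq_div, div_div]
  have hcc : ⟪c, c⟫ = a := by
    rw [hc, real_inner_smul_left, real_inner_smul_right, sum_inner]
    have hsum2 : ∀ i : Fin (n - k + 1),
        ⟪E (Fin.castLE hle i), ∑ j : Fin (n - k + 1), E (Fin.castLE hle j)⟫
          = 1 + (((n : ℝ) - k + 1) - 1) * (-1 / n) := by
      intro i
      rw [inner_sum]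
      rw [show (1 : ℝ) + (((n:ℝ) - k + 1) - 1) * (-1/n)
          = 1 + ((Fintype.card (Fin (n - k + 1)) : ℝ) - 1) * (-1/n) by
        rw [Fintype.card_fin, hNval]]
      rw [← sum_ite_card' (i : Fin (n - k + 1)) 1 (-1 / (n:ℝ))]
      refine Finset.sum_congr rfl fun j _ => ?_
      rw [hEE]
      simp [eq_comm]
    simp_rw [hsum2]
    rw [Finset.sum_const, Finset.card_univ, Fintype.card_fin, nsmul_eq_mul, hNval, hkey,
      inv_mul_cancel_left₀ hN0, inv_mul_eq_div, div_div]
  -- s facts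
  have hs0 : 0 ≤ s := by
    rw [hs]
    exact Real.sin_nonneg_of_nonneg_of_le_pi ht.1 (by linarith [ht.2, Real.pi_pos])
  have hcos : 0 < Real.cos t := by
    apply Real.cos_pos_of_mem_Ioo
    constructor
    · linarith [ht.1, Real.pi_pos]
    · exact ht.2
  have hs2 : s ^ 2 < 1 := by
    have := Real.sin_sq_add_cos_sq t
    rw [hs]
    nlinarith
  -- squared norms and inner products of scaled points
  have hiscE : ⟪s • c, s • E 0⟫ = s ^ 2 * a := by
    rw [real_inner_smul_left, real_inner_smul_right, hcE]; ring
  have hnsc : ‖s • c‖ ^ 2 = s ^ 2 * a := by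
    rw [← real_inner_self_eq_norm_sq, real_inner_smul_left, real_inner_smul_right, hcc]; ring
  have hnsE : ‖s • E 0‖ ^ 2 = s ^ 2 := by
    rw [← real_inner_self_eq_norm_sq, real_inner_smul_left, real_inner_smul_right,
      real_inner_self_eq_norm_sq, hnorm]; ring
  rw [dK, hiscE, hnsc, hnsE]
  exact key_analytic' s a hs0 hs2 ha1
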